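/- Let p ∈ [0,1]. The following hold for G(n_b,n_w,p) and every k ∈ [n_b]: (i) if v ∈ 𝒥^w_k and N(v) ≠ ∅, then there exists j ∈ [k] such that v = σ(τ^b_j − 1), σ(τ^b_j) ∈ N(v), and σ(τ^b_j) ∈ ℐ^b_k; (ii) 𝒥^w_{n_b} ∩ 𝒪^w_k = ∅ and ℐ^b_{n_b} ∩ 𝒪^b_k = ∅; (iii) V^w_n ∖ 𝒦^w_k is the disjoint union of the sets 𝒪^w_j for j ∈ [k−1] together with 𝒥^w_k, and V^b_n ∖ 𝒦^b_k is the disjoint union of the sets 𝒪^b_j for j ∈ [k−1] together with ℐ^b_k; (iv) N(Σ^b(τ^b_k)) ⊆ (∪_{j∈[k]} 𝒪^w_j) ∪ 𝒥^w_k, and N²(Σ^b(τ^b_k)) = (∪_{j∈[k]} 𝒪^b_j) ∖ Σ^b(τ^b_k). -/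

import Mathlib

open MeasureTheory ProbabilityTheory Filter

namespace PrimBip

/-- Vertex set of the complete bipartite graph `K_{n_b,n_w}`:
black vertices are `Sum.inl`, white vertices are `Sum.inr`. -/
abbrev V (nb nw : ℕ) := Fin nb ⊕ Fin nw

def blacks (nb nw : ℕ) : Set (V nb nw) := Set.range Sum.inl

def whites (nb nw : ℕ) : Set (V nb nw) := Set.range Sum.inr

/-- Edge weights extended to pairs of vertices; non-edges get the junk value `2`. -/
def wt {nb nw : ℕ} (W : Fin nb → Fin nw → ℝ) : V nb nw → V nb nw → ℝ
  | Sum.inl b, Sum.inr w => W b w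
  | Sum.inr w, Sum.inl b => W b w
  | _, _ => 2

lemma wt_symm {nb nw : ℕ} (W : Fin nb → Fin nw → ℝ) (v v' : V nb nw) :
    wt W v v' = wt W v' v := by
  cases v <;> cases v' <;> rfl

/-- The a.s. properties of i.i.d. uniform edge weights: all weights lie in `(0,1)`
and are pairwise distinct. -/
def GoodWeights {nb nw : ℕ} (W : Fin nb → Fin nw → ℝ) : Prop :=
  (∀ b w, W b w ∈ Set.Ioo (0:ℝ) 1) ∧
    Function.Injective (fun bw : Fin nb × Fin nw => W bw.1 bw.2)

/-- `σ` (0-indexed: `σ 0` is the first vertex) is a Prim sequence for the weights `W`: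
it enumerates all the vertices, and at each step `k ≥ 1` the vertex `σ k` is an endpoint
of the minimal-weight edge joining `{σ 0, …, σ (k-1)}` to its complement. -/
def IsPrimSeq {nb nw : ℕ} (W : Fin nb → Fin nw → ℝ) (σ : ℕ → V nb nw) : Prop :=
  σ '' Set.Iio (nb + nw) = Set.univ ∧ Set.InjOn σ (Set.Iio (nb + nw)) ∧
    ∀ k, 0 < k → k < nb + nw →
      ∃ j < k, ∀ a b, a < k → k ≤ b → b < nb + nw →
        wt W (σ j) (σ k) ≤ wt W (σ a) (σ b)

/-- The Bernoulli bond percolation graph `G(n_b,n_w,p)`: keep exactly the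
(bipartite) edges of weight `≤ p`. -/
def percGraph {nb nw : ℕ} (W : Fin nb → Fin nw → ℝ) (p : ℝ) : SimpleGraph (V nb nw) where
  Adj v v' := v ≠ v' ∧ wt W v v' ≤ p
  symm := ⟨fun _ _ h => ⟨h.1.symm, by rw [wt_symm]; exact h.2⟩⟩
  loopless := ⟨fun _ h => h.1 rfl⟩

/-- 1-neighbourhood of a set of vertices. -/
def nbhd {α : Type*} (G : SimpleGraph α) (A : Set α) : Set α :=
  {v | v ∉ A ∧ ∃ a ∈ A, G.Adj a v}

/-- 2-neighbourhood of a set of vertices. -/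
def nbhd2 {α : Type*} (G : SimpleGraph α) (A : Set α) : Set α :=
  nbhd G (nbhd G A) \ A

/-- `Sig σ i` = `Σ(i)`, the set of the first `i` vertices in the Prim ranking. -/
def Sig {nb nw : ℕ} (σ : ℕ → V nb nw) (i : ℕ) : Set (V nb nw) := σ '' Set.Iio i

def SigB {nb nw : ℕ} (σ : ℕ → V nb nw) (i : ℕ) : Set (V nb nw) := Sig σ i ∩ blacks nb nw

def SigW {nb nw : ℕ} (σ : ℕ → V nb nw) (i : ℕ) : Set (V nb nw) := Sig σ i ∩ whites nb nw

/-- `tb σ k` = `τ^b_k`, the (1-based) Prim rank of the `k`-th black vertex. -/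
noncomputable def tb {nb nw : ℕ} (σ : ℕ → V nb nw) (k : ℕ) : ℕ :=
  sInf {i | (SigB σ i).ncard = k}

/-- The vertex of (1-based) Prim rank `i`. -/
def vat {nb nw : ℕ} (σ : ℕ → V nb nw) (i : ℕ) : V nb nw := σ (i - 1)

/-- `σ^b(k) = σ(τ^b_k)`, the `k`-th black vertex in Prim order. -/
noncomputable def sigb {nb nw : ℕ} (σ : ℕ → V nb nw) (k : ℕ) : V nb nw := vat σ (tb σ k)

/-- 0-based Prim rank of a vertex. -/
noncomputable def rk0 {nb nw : ℕ} (σ : ℕ → V nb nw) (v : V nb nw) : ℕ := sInf {i | σ i = v}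

/-- A lead vertex: the vertex of lowest Prim rank in its connected component of `G`. -/
def isLead {nb nw : ℕ} (G : SimpleGraph (V nb nw)) (σ : ℕ → V nb nw) (v : V nb nw) : Prop :=
  ∀ u, G.Reachable v u → rk0 σ v ≤ rk0 σ u

/-- A root vertex: a black vertex of lowest Prim rank among the black vertices of
its connected component of `G`. -/
def isRoot {nb nw : ℕ} (G : SimpleGraph (V nb nw)) (σ : ℕ → V nb nw) (v : V nb nw) : Prop :=
  v ∈ blacks nb nw ∧ ∀ u ∈ blacks nb nw, G.Reachable v u → rk0 σ v ≤ rk0 σ u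

/-- `𝒥^w_k`: the white lead vertices among `Σ^w(τ^b_k)`. -/
def Jw {nb nw : ℕ} (G : SimpleGraph (V nb nw)) (σ : ℕ → V nb nw) (k : ℕ) : Set (V nb nw) :=
  {v | v ∈ SigW σ (tb σ k) ∧ isLead G σ v}

/-- `ℐ^b_k`: the root vertices among `Σ^b(τ^b_k)`. -/
def Ib {nb nw : ℕ} (G : SimpleGraph (V nb nw)) (σ : ℕ → V nb nw) (k : ℕ) : Set (V nb nw) :=
  {v | v ∈ SigB σ (tb σ k) ∧ isRoot G σ v}

noncomputable def Jwc {nb nw : ℕ} (G : SimpleGraph (V nb nw)) (σ : ℕ → V nb nw) (k : ℕ) : ℕ :=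
  (Jw G σ k).ncard

noncomputable def Ibc {nb nw : ℕ} (G : SimpleGraph (V nb nw)) (σ : ℕ → V nb nw) (k : ℕ) : ℕ :=
  (Ib G σ k).ncard

/-- `𝒦^w_k`: the pool of white vertices available for discovery at step `k`. -/
noncomputable def Kw {nb nw : ℕ} (G : SimpleGraph (V nb nw)) (σ : ℕ → V nb nw) :
    ℕ → Set (V nb nw)
  | 0 => ∅
  | 1 => whites nb nw \ SigW σ (tb σ 1)
  | (k+2) => Kw G σ (k+1) \ ((nbhd G {sigb σ (k+1)} ∩ Kw G σ (k+1)) ∪ SigW σ (tb σ (k+2)))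

/-- `𝒪^w_k = N(σ^b(k)) ∩ 𝒦^w_k`. -/
noncomputable def Ow {nb nw : ℕ} (G : SimpleGraph (V nb nw)) (σ : ℕ → V nb nw) (k : ℕ) :
    Set (V nb nw) :=
  nbhd G {sigb σ k} ∩ Kw G σ k

/-- Auxiliary recursion: `(ObAux k).1 = ∪_{j ∈ [k]} 𝒪^b_j` and `(ObAux k).2 = 𝒪^b_k`. -/
noncomputable def ObAux {nb nw : ℕ} (G : SimpleGraph (V nb nw)) (σ : ℕ → V nb nw) :
    ℕ → Set (V nb nw) × Set (V nb nw)
  | 0 => (∅, ∅)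
  | (k+1) =>
    let c := (ObAux G σ k).1
    let o := nbhd2 G {sigb σ (k+1)} ∩ (blacks nb nw \ (c ∪ SigB σ (tb σ (k+1))))
    (c ∪ o, o)

/-- `𝒪^b_k`, the 2-neighbourhood discovered at step `k`. -/
noncomputable def Ob {nb nw : ℕ} (G : SimpleGraph (V nb nw)) (σ : ℕ → V nb nw) (k : ℕ) :
    Set (V nb nw) :=
  (ObAux G σ k).2

/-- `𝒦^b_k = V^b ∖ (∪_{j ≤ k-1} 𝒪^b_j ∪ Σ^b(τ^b_k))`. -/
noncomputable def Kb {nb nw : ℕ} (G : SimpleGraph (V nb nw)) (σ : ℕ → V nb nw) (k : ℕ) :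
    Set (V nb nw) :=
  blacks nb nw \ ((ObAux G σ (k-1)).1 ∪ SigB σ (tb σ k))

noncomputable def Owc {nb nw : ℕ} (G : SimpleGraph (V nb nw)) (σ : ℕ → V nb nw) (k : ℕ) : ℕ :=
  (Ow G σ k).ncard

noncomputable def Obc {nb nw : ℕ} (G : SimpleGraph (V nb nw)) (σ : ℕ → V nb nw) (k : ℕ) : ℕ :=
  (Ob G σ k).ncard

noncomputable def Kwc {nb nw : ℕ} (G : SimpleGraph (V nb nw)) (σ : ℕ → V nb nw) (k : ℕ) : ℕ :=
  (Kw G σ k).ncard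

noncomputable def Kbc {nb nw : ℕ} (G : SimpleGraph (V nb nw)) (σ : ℕ → V nb nw) (k : ℕ) : ℕ :=
  (Kb G σ k).ncard

/-- `S^w_k = Σ_{j ∈ [k]} O^w_j`. -/
noncomputable def Swk {nb nw : ℕ} (G : SimpleGraph (V nb nw)) (σ : ℕ → V nb nw) (k : ℕ) : ℕ :=
  ∑ j ∈ Finset.range k, Owc G σ (j+1)

/-- `S^b_k = Σ_{j ∈ [k]} O^b_j`. -/
noncomputable def Sbk {nb nw : ℕ} (G : SimpleGraph (V nb nw)) (σ : ℕ → V nb nw) (k : ℕ) : ℕ :=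
  ∑ j ∈ Finset.range k, Obc G σ (j+1)

/-- `R(k) = |Σ^w(τ^b_k)| − J^w(k)`. -/
noncomputable def Rfn {nb nw : ℕ} (G : SimpleGraph (V nb nw)) (σ : ℕ → V nb nw) (k : ℕ) : ℤ :=
  ((SigW σ (tb σ k)).ncard : ℤ) - Jwc G σ k

/-- `Δ_k = Σ_{1 ≤ i ≤ O^w_k} |𝒩_i| = |N(𝒪^w_k) ∩ 𝒦^b_k|`. -/
noncomputable def Delta {nb nw : ℕ} (G : SimpleGraph (V nb nw)) (σ : ℕ → V nb nw) (k : ℕ) : ℕ :=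
  (nbhd G (Ow G σ k) ∩ Kb G σ k).ncard

/-- `𝒜^w_k = {σ(i) : i > τ^b_k, σ(i) ∈ ∪_{j ∈ [k−1]} 𝒪^w_j}`. -/
noncomputable def Aw {nb nw : ℕ} (G : SimpleGraph (V nb nw)) (σ : ℕ → V nb nw) (k : ℕ) :
    Set (V nb nw) :=
  (⋃ j ∈ Finset.range (k-1), Ow G σ (j+1)) \ Sig σ (tb σ k)

/-- `𝒜^b_k = (∪_{j ∈ [k]} 𝒪^b_j) ∖ Σ^b(τ^b_k)`. -/
noncomputable def Ab {nb nw : ℕ} (G : SimpleGraph (V nb nw)) (σ : ℕ → V nb nw) (k : ℕ) :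
    Set (V nb nw) :=
  (⋃ j ∈ Finset.range k, Ob G σ (j+1)) \ SigB σ (tb σ k)

/-- The interval `⟦i,j⟧_π` of vertices of π-rank between `i` and `j`. -/
def geoInterval {α : Type*} {m : ℕ} (π : Fin m ≃ α) (i j : Fin m) : Set α :=
  {v | i ≤ π.symm v ∧ π.symm v ≤ j}

/-- `π` is a graph exploration order (GEO) for `G`. -/
def IsGEO {α : Type*} {m : ℕ} (G : SimpleGraph α) (π : Fin m ≃ α) : Prop :=
  ∀ i j : Fin m, i ≤ j → G.Reachable (π i) (π j) →
    ∃ i', i' ≤ i ∧ (G.induce (geoInterval π i' j)).Connected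

/-- A `π`-good path from `u` to `v`: a path along which the π-ranks strictly increase. -/
def IsGoodPath {α : Type*} {m : ℕ} (G : SimpleGraph α) (π : Fin m ≃ α) (u v : α) : Prop :=
  ∃ (k : ℕ) (w : ℕ → α), w 0 = u ∧ w k = v ∧ (∀ i < k, G.Adj (w i) (w (i+1))) ∧
    StrictMonoOn (fun i => π.symm (w i)) (Set.Iic k)

/-- GEO for a 0-indexed enumeration `σ` of the `n` vertices. -/
def IsGEOSeq {α : Type*} (G : SimpleGraph α) (n : ℕ) (σ : ℕ → α) : Prop :=
  ∀ i j, i ≤ j → j < n → G.Reachable (σ i) (σ j) →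
    ∃ i' ≤ i, (G.induce (σ '' Set.Icc i' j)).Connected

/-- `pew W σ i` = `U_{e_i}`, the weight of the `i`-th Prim edge: the minimal weight
over the cut between the first `i` vertices and the rest. -/
noncomputable def pew {nb nw : ℕ} (W : Fin nb → Fin nw → ℝ) (σ : ℕ → V nb nw) (i : ℕ) : ℝ :=
  sInf {x | ∃ a b, a < i ∧ i ≤ b ∧ b < nb + nw ∧ x = wt W (σ a) (σ b)}

/-- The sequence `J_j` of Prim ranks at which new components start. -/
noncomputable def Jseq {nb nw : ℕ} (W : Fin nb → Fin nw → ℝ) (σ : ℕ → V nb nw) (p : ℝ) :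
    ℕ → ℕ
  | 0 => 0
  | (j+1) => sInf ({i | Jseq W σ p j < i ∧ i < nb + nw ∧ p < pew W σ i} ∪ {nb + nw})

/-- `m = inf{j ≥ 1 : J_j = n}`, the number of connected components. -/
noncomputable def mComp {nb nw : ℕ} (W : Fin nb → Fin nw → ℝ) (σ : ℕ → V nb nw) (p : ℝ) : ℕ :=
  sInf {j | 1 ≤ j ∧ Jseq W σ p j = nb + nw}

/-- The binomial probability mass function. -/
noncomputable def binomPMF (m : ℕ) (p : ℝ) (j : ℕ) : ℝ :=
  (m.choose j : ℝ) * p ^ j * (1 - p) ^ (m - j)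

/-- The pmf of the distribution `𝒟(m, k, p)`: the law of `X_1 + ⋯ + X_k` where
`X_1 ~ Bin(m,p)` and, given `X_1,…,X_i`, `X_{i+1} ~ Bin(m − Σ_{j≤i} X_j, p)`. -/
noncomputable def Dpmf : ℕ → ℕ → ℝ → ℕ → ℝ
  | _, 0, _, j => if j = 0 then 1 else 0
  | m, (k+1), p, j => ∑ i ∈ Finset.range (j+1), binomPMF m p i * Dpmf (m - i) k p (j - i)

section Aux

open Classical in
/-- Breakpoint predicate: rank `l` starts a new component of `G(p)`. -/
def Brk {nb nw : ℕ} (W : Fin nb → Fin nw → ℝ) (σ : ℕ → V nb nw) (p : ℝ) (l : ℕ) : Prop :=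
  l = 0 ∨ p < pew W σ l

open Classical in
/-- Start of the block (component) containing rank `l`. -/
noncomputable def bst {nb nw : ℕ} (W : Fin nb → Fin nw → ℝ) (σ : ℕ → V nb nw) (p : ℝ)
    (l : ℕ) : ℕ :=
  Nat.findGreatest (fun b => Brk W σ p b) l

variable {nb nw : ℕ} {W : Fin nb → Fin nw → ℝ} {σ : ℕ → V nb nw} {p : ℝ}

lemma wt_nonneg (hW : GoodWeights W) (u v : V nb nw) : 0 ≤ wt W u v := by
  cases u <;> cases v <;> simp only [wt] <;> first
    | exact (hW.1 _ _).1.le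
    | norm_num

lemma black_or_white (v : V nb nw) : v ∈ blacks nb nw ∨ v ∈ whites nb nw := by
  cases v with
  | inl b => exact Or.inl ⟨b, rfl⟩
  | inr w => exact Or.inr ⟨w, rfl⟩

lemma not_black_white {v : V nb nw} (hb : v ∈ blacks nb nw) (hw : v ∈ whites nb nw) : False := by
  obtain ⟨b, rfl⟩ := hb; obtain ⟨w, h⟩ := hw; cases h

lemma adj_colors (hp1 : p ≤ 1) {u v : V nb nw} (h : (percGraph W p).Adj u v) :
    (u ∈ blacks nb nw ∧ v ∈ whites nb nw) ∨ (u ∈ whites nb nw ∧ v ∈ blacks nb nw) := by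
  have h2 := h.2
  cases u with
  | inl b =>
    cases v with
    | inl b' => exfalso; simp [wt] at h2; linarith
    | inr w => exact Or.inl ⟨⟨b, rfl⟩, ⟨w, rfl⟩⟩
  | inr w =>
    cases v with
    | inl b => exact Or.inr ⟨⟨w, rfl⟩, ⟨b, rfl⟩⟩
    | inr w' => exfalso; simp [wt] at h2; linarith

lemma no_adj_blacks (hp1 : p ≤ 1) {u v : V nb nw} (hu : u ∈ blacks nb nw)
    (hv : v ∈ blacks nb nw) : ¬ (percGraph W p).Adj u v := fun h => by
  rcases adj_colors hp1 h with ⟨_, h2⟩ | ⟨h1, _⟩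
  · exact not_black_white hv h2
  · exact not_black_white hu h1

lemma sig_inj (hσ : IsPrimSeq W σ) {i j : ℕ} (hi : i < nb + nw) (hj : j < nb + nw)
    (h : σ i = σ j) : i = j := hσ.2.1 hi hj h

lemma sig_surj (hσ : IsPrimSeq W σ) (v : V nb nw) : ∃ l < nb + nw, σ l = v := by
  have := hσ.1
  have hv : v ∈ σ '' Set.Iio (nb + nw) := this ▸ Set.mem_univ v
  obtain ⟨l, hl, rfl⟩ := hv
  exact ⟨l, hl, rfl⟩

lemma rk0_sig (hσ : IsPrimSeq W σ) {l : ℕ} (hl : l < nb + nw) : rk0 σ (σ l) = l := by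
  have h1 : l ∈ {i | σ i = σ l} := rfl
  have h2 : rk0 σ (σ l) ≤ l := Nat.sInf_le h1
  rcases Nat.lt_or_ge (rk0 σ (σ l)) l with h | h
  · exfalso
    have hm : rk0 σ (σ l) ∈ {i | σ i = σ l} := Nat.sInf_mem ⟨l, h1⟩
    exact absurd (sig_inj hσ (h.trans hl) hl hm) (Nat.ne_of_lt h)
  · exact le_antisymm h2 h

lemma pew_le (hW : GoodWeights W) {a k b : ℕ} (ha : a < k) (hk : k ≤ b) (hb : b < nb + nw) :
    pew W σ k ≤ wt W (σ a) (σ b) := by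
  have hbdd : BddBelow {x | ∃ a b, a < k ∧ k ≤ b ∧ b < nb + nw ∧ x = wt W (σ a) (σ b)} := by
    refine ⟨0, ?_⟩
    rintro x ⟨a', b', _, _, _, rfl⟩
    exact wt_nonneg hW _ _
  exact csInf_le hbdd ⟨a, b, ha, hk, hb, rfl⟩

lemma pew_eq_edge (hW : GoodWeights W) (hσ : IsPrimSeq W σ) {k : ℕ} (h0 : 0 < k)
    (hk : k < nb + nw) : ∃ j < k, pew W σ k = wt W (σ j) (σ k) := by
  obtain ⟨j, hj, hmin⟩ := hσ.2.2 k h0 hk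
  refine ⟨j, hj, le_antisymm (pew_le hW hj le_rfl hk) (le_csInf ⟨_, j, k, hj, le_rfl, hk, rfl⟩ ?_)⟩
  rintro x ⟨a, b, ha, hab, hb, rfl⟩
  exact hmin a b ha hab hb

lemma brk_zero : Brk W σ p 0 := Or.inl rfl

open Classical in
lemma bst_le (l : ℕ) : bst W σ p l ≤ l := Nat.findGreatest_le l

open Classical in
lemma brk_bst (l : ℕ) : Brk W σ p (bst W σ p l) := by
  unfold bst
  exact Nat.findGreatest_spec (P := fun b => Brk W σ p b) (Nat.zero_le l) brk_zero

open Classical in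
lemma le_bst {m l : ℕ} (hb : Brk W σ p m) (hml : m ≤ l) : m ≤ bst W σ p l :=
  Nat.le_findGreatest hml hb

lemma bst_mono {i j : ℕ} (h : i ≤ j) : bst W σ p i ≤ bst W σ p j :=
  le_bst (brk_bst i) ((bst_le i).trans h)

lemma bst_eq_of_between {i j : ℕ} (h1 : bst W σ p j ≤ i) (h2 : i ≤ j) :
    bst W σ p i = bst W σ p j :=
  le_antisymm (bst_mono h2) (le_bst (brk_bst j) h1)

lemma bst_eq_self_iff {l : ℕ} : bst W σ p l = l ↔ Brk W σ p l := by
  constructor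
  · intro h; rw [← h]; exact brk_bst l
  · intro h; exact le_antisymm (bst_le l) (le_bst h le_rfl)

end Aux
section Aux2

variable {nb nw : ℕ} {W : Fin nb → Fin nw → ℝ} {σ : ℕ → V nb nw} {p : ℝ}

lemma not_brk {l : ℕ} (hl : ¬ Brk W σ p l) : 0 < l ∧ pew W σ l ≤ p := by
  unfold Brk at hl
  push_neg at hl
  exact ⟨Nat.pos_of_ne_zero hl.1, hl.2⟩

/-- No `G(p)`-edge crosses the cut at a positive breakpoint. -/
lemma no_cross (hW : GoodWeights W) {b a c : ℕ} (hb : Brk W σ p b) (hb0 : 0 < b)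
    (hab : a < b) (hbc : b ≤ c) (hc : c < nb + nw) : ¬ (percGraph W p).Adj (σ a) (σ c) := by
  rintro ⟨-, hle⟩
  rcases hb with h0 | hlt
  · omega
  · exact absurd (le_trans (pew_le hW hab hbc hc) hle) (not_le.mpr hlt)

/-- Prim's edge at a non-breakpoint rank `l` connects `σ l` to an earlier vertex of
its own block. -/
lemma prim_edge (hW : GoodWeights W) (hσ : IsPrimSeq W σ) {l : ℕ} (hl : l < nb + nw)
    (hnbrk : ¬ Brk W σ p l) :
    ∃ j, bst W σ p l ≤ j ∧ j < l ∧ (percGraph W p).Adj (σ j) (σ l) := by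
  obtain ⟨h0, hle⟩ := not_brk hnbrk
  obtain ⟨j, hj, hpe⟩ := pew_eq_edge hW hσ h0 hl
  have hwt : wt W (σ j) (σ l) ≤ p := hpe ▸ hle
  have hne : σ j ≠ σ l := fun h => absurd (sig_inj hσ (hj.trans hl) hl h) (Nat.ne_of_lt hj)
  refine ⟨j, ?_, hj, ⟨hne, hwt⟩⟩
  by_contra hlt
  push_neg at hlt
  rcases brk_bst (W := W) (σ := σ) (p := p) l with h0' | hlt'
  · omega
  · exact absurd (le_trans (pew_le hW hlt (bst_le l) hl) hwt) (not_le.mpr hlt')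

/-- Everything reachable from inside `σ '' Iio b` stays there, for a breakpoint `b`. -/
lemma reach_stay (hW : GoodWeights W) (hσ : IsPrimSeq W σ) {b : ℕ} (hb : Brk W σ p b)
    (hb0 : 0 < b) {u v : V nb nw}
    (h : (percGraph W p).Reachable u v) (hu : ∃ a < b, u = σ a) : ∃ a < b, v = σ a := by
  obtain ⟨w⟩ := h
  induction w with
  | nil => exact hu
  | @cons x y z hadj w ih =>
    apply ih
    obtain ⟨a, ha, rfl⟩ := hu
    obtain ⟨c, hc, rfl⟩ := sig_surj hσ y
    refine ⟨c, ?_, rfl⟩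
    by_contra hcb
    exact no_cross hW hb hb0 ha (not_lt.mp hcb) hc hadj

/-- Each vertex is reachable from the start of its block. -/
lemma reach_bst (hW : GoodWeights W) (hσ : IsPrimSeq W σ) :
    ∀ l, l < nb + nw → (percGraph W p).Reachable (σ (bst W σ p l)) (σ l) := by
  intro l
  induction l using Nat.strong_induction_on with
  | _ l ih =>
    intro hl
    by_cases hbl : Brk W σ p l
    · rw [bst_eq_self_iff.mpr hbl]
    · obtain ⟨j, hj1, hj2, hadj⟩ := prim_edge hW hσ hl hbl
      have hbj : bst W σ p j = bst W σ p l := bst_eq_of_between hj1 hj2.le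
      exact (hbj ▸ ih j hj2 (hj2.trans hl)).trans hadj.reachable

/-- Components of `G(p)` are exactly the Prim blocks. -/
lemma reach_iff_bst (hW : GoodWeights W) (hσ : IsPrimSeq W σ) {i j : ℕ}
    (hi : i < nb + nw) (hj : j < nb + nw) :
    (percGraph W p).Reachable (σ i) (σ j) ↔ bst W σ p i = bst W σ p j := by
  constructor
  · intro h
    rcases le_total i j with hij | hij
    · by_contra hne
      have hlt : i < bst W σ p j := by
        rcases Nat.lt_or_ge i (bst W σ p j) with h' | h'
        · exact h'
        · exact absurd (bst_eq_of_between h' hij) hne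
      obtain ⟨a, ha, hav⟩ := reach_stay hW hσ (brk_bst j) (by omega) h ⟨i, hlt, rfl⟩
      have h1 : a = j := sig_inj hσ (lt_of_lt_of_le ha ((bst_le j).trans hj.le)) hj hav.symm
      have h2 := bst_le (W := W) (σ := σ) (p := p) j
      omega
    · by_contra hne
      have hlt : j < bst W σ p i := by
        rcases Nat.lt_or_ge j (bst W σ p i) with h' | h'
        · exact h'
        · exact absurd (bst_eq_of_between h' hij) (fun hh => hne hh.symm)
      obtain ⟨a, ha, hav⟩ := reach_stay hW hσ (brk_bst i) (by omega) h.symm ⟨j, hlt, rfl⟩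
      have h1 : a = i := sig_inj hσ (lt_of_lt_of_le ha ((bst_le i).trans hi.le)) hi hav.symm
      have h2 := bst_le (W := W) (σ := σ) (p := p) i
      omega
  · intro h
    exact ((h ▸ reach_bst hW hσ i hi) : (percGraph W p).Reachable (σ (bst W σ p j)) (σ i)).symm.trans
      (reach_bst hW hσ j hj)

/-- Lead vertices are exactly the block starts. -/
lemma lead_iff (hW : GoodWeights W) (hσ : IsPrimSeq W σ) {l : ℕ} (hl : l < nb + nw) :
    isLead (percGraph W p) σ (σ l) ↔ bst W σ p l = l := by
  constructor
  · intro h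
    have hb : bst W σ p l < nb + nw := lt_of_le_of_lt (bst_le l) hl
    have := h (σ (bst W σ p l)) ((reach_bst hW hσ (p := p) l hl).symm)
    rw [rk0_sig hσ hl, rk0_sig hσ hb] at this
    exact le_antisymm (bst_le l) this
  · intro h u hr
    obtain ⟨j, hjn, rfl⟩ := sig_surj hσ u
    rw [rk0_sig hσ hl, rk0_sig hσ hjn]
    have := (reach_iff_bst hW hσ hl hjn).mp hr
    calc l = bst W σ p l := h.symm
    _ = bst W σ p j := this ▸ rfl
    _ ≤ j := bst_le j

/-- Root vertices are exactly the minimal-rank blacks of their blocks. -/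
lemma root_iff (hW : GoodWeights W) (hσ : IsPrimSeq W σ) {l : ℕ} (hl : l < nb + nw)
    (hb : σ l ∈ blacks nb nw) :
    isRoot (percGraph W p) σ (σ l) ↔
      ∀ j, j < nb + nw → bst W σ p j = bst W σ p l → σ j ∈ blacks nb nw → l ≤ j := by
  constructor
  · intro h j hjn hbst hjb
    have := h.2 (σ j) hjb ((reach_iff_bst hW hσ hl hjn).mpr hbst.symm)
    rwa [rk0_sig hσ hl, rk0_sig hσ hjn] at this
  · intro h
    refine ⟨hb, fun u hub hr => ?_⟩
    obtain ⟨j, hjn, rfl⟩ := sig_surj hσ u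
    rw [rk0_sig hσ hl, rk0_sig hσ hjn]
    exact h j hjn ((reach_iff_bst hW hσ hl hjn).mp hr).symm hub

end Aux2
section Aux3

/-- Number of black vertices among the first `i` vertices in Prim order. -/
noncomputable def cB {nb nw : ℕ} (σ : ℕ → V nb nw) (i : ℕ) : ℕ := (SigB σ i).ncard

variable {nb nw : ℕ} {W : Fin nb → Fin nw → ℝ} {σ : ℕ → V nb nw} {p : ℝ}

lemma sig_image_succ (i : ℕ) : σ '' Set.Iio (i+1) = insert (σ i) (σ '' Set.Iio i) := by
  rw [show Set.Iio (i+1) = insert i (Set.Iio i) by ext; simp, Set.image_insert_eq]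

lemma cB_zero : cB σ 0 = 0 := by
  have : Set.Iio 0 = (∅ : Set ℕ) := by ext x; simp
  simp [cB, SigB, Sig, this]

lemma cB_mono {i j : ℕ} (h : i ≤ j) : cB σ i ≤ cB σ j :=
  Set.ncard_le_ncard (Set.inter_subset_inter_left _ (Set.image_mono (fun x hx => lt_of_lt_of_le hx h)))

lemma cB_succ_le (i : ℕ) : cB σ (i+1) ≤ cB σ i + 1 := by
  unfold cB SigB Sig
  rw [sig_image_succ]
  have hsub : insert (σ i) (σ '' Set.Iio i) ∩ blacks nb nw ⊆
      insert (σ i) (σ '' Set.Iio i ∩ blacks nb nw) := by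
    rintro x ⟨hx1 | hx1, hx2⟩
    · exact Or.inl hx1
    · exact Or.inr ⟨hx1, hx2⟩
  exact le_trans (Set.ncard_le_ncard hsub) (Set.ncard_insert_le _ _)

lemma not_mem_sig_self (hσ : IsPrimSeq W σ) {i : ℕ} (hi : i < nb + nw) :
    σ i ∉ σ '' Set.Iio i := by
  rintro ⟨a, ha, hav⟩
  exact absurd (sig_inj hσ (ha.trans hi) hi hav) (Nat.ne_of_lt ha)

lemma cB_succ_black (hσ : IsPrimSeq W σ) {i : ℕ} (hi : i < nb + nw)
    (hb : σ i ∈ blacks nb nw) : cB σ (i+1) = cB σ i + 1 := by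
  unfold cB SigB Sig
  rw [sig_image_succ, Set.insert_inter_of_mem hb,
    Set.ncard_insert_of_notMem (fun h => not_mem_sig_self hσ hi h.1)]

lemma cB_succ_white {i : ℕ} (hw : σ i ∉ blacks nb nw) : cB σ (i+1) = cB σ i := by
  unfold cB SigB Sig
  rw [sig_image_succ, Set.insert_inter_of_notMem hw]

lemma ncard_blacks : (blacks nb nw).ncard = nb := by
  rw [blacks, ← Set.image_univ, Set.ncard_image_of_injective _ Sum.inl_injective,
    Set.ncard_univ, Nat.card_eq_fintype_card, Fintype.card_fin]

lemma cB_top (hσ : IsPrimSeq W σ) : cB σ (nb + nw) = nb := by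
  unfold cB SigB Sig
  rw [hσ.1, Set.univ_inter, ncard_blacks]

/-- Main facts about `τ^b_k`. -/
lemma tb_facts (hσ : IsPrimSeq W σ) {k : ℕ} (hk1 : 1 ≤ k) (hk2 : k ≤ nb) :
    tb σ k ≤ nb + nw ∧ 1 ≤ tb σ k ∧ cB σ (tb σ k) = k ∧ cB σ (tb σ k - 1) = k - 1 ∧
      σ (tb σ k - 1) ∈ blacks nb nw ∧ tb σ k - 1 < nb + nw := by
  set S0 : Set ℕ := {i | k ≤ cB σ i} with hS0
  have hn : nb + nw ∈ S0 := by rw [hS0]; simpa [cB_top hσ] using hk2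
  set i₀ := sInf S0 with hi₀
  have hi₀mem : i₀ ∈ S0 := Nat.sInf_mem ⟨_, hn⟩
  have hi₀le : i₀ ≤ nb + nw := Nat.sInf_le hn
  have hi₀pos : 1 ≤ i₀ := by
    rcases Nat.eq_zero_or_pos i₀ with h | h
    · exfalso
      have h2 : k ≤ cB σ i₀ := hi₀mem
      rw [h, cB_zero] at h2
      omega
    · exact h
  have hpred : ¬ (i₀ - 1 ∈ S0) := Nat.notMem_of_lt_sInf (by omega)
  have hclt : cB σ (i₀ - 1) < k := by
    by_contra h; exact hpred (not_lt.mp h)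
  have hstep : cB σ i₀ ≤ cB σ (i₀ - 1) + 1 := by
    have := cB_succ_le (σ := σ) (i₀ - 1)
    rwa [Nat.sub_add_cancel hi₀pos] at this
  have hcB : cB σ i₀ = k := le_antisymm (by omega) hi₀mem
  have hcBpred : cB σ (i₀ - 1) = k - 1 := by omega
  have hpredlt : i₀ - 1 < nb + nw := by omega
  have hblack : σ (i₀ - 1) ∈ blacks nb nw := by
    by_contra h
    have := cB_succ_white (σ := σ) (i := i₀ - 1) h
    rw [Nat.sub_add_cancel hi₀pos] at this
    omega
  have htb : tb σ k = i₀ := by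
    have h1 : i₀ ∈ {i | (SigB σ i).ncard = k} := hcB
    have h2 : ∀ i ∈ {i | (SigB σ i).ncard = k}, i₀ ≤ i := fun i hi =>
      Nat.sInf_le (by rw [hS0]; exact le_of_eq hi.symm)
    exact le_antisymm (Nat.sInf_le h1) (h2 _ (Nat.sInf_mem ⟨_, h1⟩))
  rw [htb]
  exact ⟨hi₀le, hi₀pos, hcB, hcBpred, hblack, hpredlt⟩

lemma tb_strict_mono (hσ : IsPrimSeq W σ) {j k : ℕ} (hj : 1 ≤ j) (hjk : j < k)
    (hk : k ≤ nb) : tb σ j < tb σ k := by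
  have h1 := (tb_facts hσ hj (by omega)).2.2.1
  have h2 := (tb_facts hσ (by omega) hk).2.2.1
  by_contra h
  push_neg at h
  have := cB_mono (σ := σ) h
  omega

lemma tb_mono (hσ : IsPrimSeq W σ) {j k : ℕ} (hj : 1 ≤ j) (hjk : j ≤ k)
    (hk : k ≤ nb) : tb σ j ≤ tb σ k := by
  rcases eq_or_lt_of_le hjk with rfl | h
  · exact le_rfl
  · exact (tb_strict_mono hσ hj h hk).le

/-- Every black vertex `σ i` is `sigb σ k` for `k = cB σ (i+1)`. -/
lemma black_rank (hσ : IsPrimSeq W σ) {i : ℕ} (hi : i < nb + nw)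
    (hb : σ i ∈ blacks nb nw) :
    1 ≤ cB σ (i+1) ∧ cB σ (i+1) ≤ nb ∧ tb σ (cB σ (i+1)) = i + 1 := by
  have hstep := cB_succ_black hσ hi hb
  have h1 : 1 ≤ cB σ (i+1) := by omega
  have h2 : cB σ (i+1) ≤ nb := by
    have := cB_mono (σ := σ) (show i + 1 ≤ nb + nw by omega)
    rw [cB_top hσ] at this; exact this
  refine ⟨h1, h2, ?_⟩
  unfold tb
  have hmem : i + 1 ∈ {j | (SigB σ j).ncard = cB σ (i+1)} := rfl
  refine le_antisymm (Nat.sInf_le hmem) ?_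
  have hmem' := Nat.sInf_mem (⟨_, hmem⟩ : {j | (SigB σ j).ncard = cB σ (i+1)}.Nonempty)
  set i' := sInf {j | (SigB σ j).ncard = cB σ (i+1)}
  by_contra h
  push_neg at h
  have : cB σ i' ≤ cB σ i := cB_mono (by omega)
  have hmm : cB σ i' = cB σ (i+1) := hmem'
  omega

lemma mem_sig_iff (hσ : IsPrimSeq W σ) {l i : ℕ} (hl : l < nb + nw) (hi : i ≤ nb + nw) :
    σ l ∈ Sig σ i ↔ l < i := by
  constructor
  · rintro ⟨a, ha, hav⟩
    rwa [sig_inj hσ (lt_of_lt_of_le ha hi) hl hav] at ha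
  · intro h; exact ⟨l, h, rfl⟩

lemma sigb_eq (k : ℕ) : sigb σ k = σ (tb σ k - 1) := rfl

/-- Membership of a black vertex in `Σ^b(τ^b_k)`. -/
lemma mem_sigB_iff (hσ : IsPrimSeq W σ) {l k : ℕ} (hl : l < nb + nw)
    (hb : σ l ∈ blacks nb nw) (hk1 : 1 ≤ k) (hk2 : k ≤ nb) :
    σ l ∈ SigB σ (tb σ k) ↔ cB σ (l+1) ≤ k := by
  obtain ⟨htn, ht1, hcB, -, -, -⟩ := tb_facts hσ hk1 hk2
  obtain ⟨hr1, hr2, hr3⟩ := black_rank hσ hl hb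
  constructor
  · rintro ⟨hmem, -⟩
    have hlt : l < tb σ k := (mem_sig_iff hσ hl htn).mp hmem
    have := cB_mono (σ := σ) (show l + 1 ≤ tb σ k by omega)
    omega
  · intro h
    have := tb_mono hσ hr1 h hk2
    rw [hr3] at this
    exact ⟨(mem_sig_iff hσ hl htn).mpr (by omega), hb⟩

/-- Membership of a white vertex in `Σ^w(τ^b_k)`. -/
lemma mem_sigW_iff (hσ : IsPrimSeq W σ) {l k : ℕ} (hl : l < nb + nw)
    (hw : σ l ∈ whites nb nw) (hk1 : 1 ≤ k) (hk2 : k ≤ nb) :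
    σ l ∈ SigW σ (tb σ k) ↔ l < tb σ k := by
  obtain ⟨htn, -, -, -, -, -⟩ := tb_facts hσ hk1 hk2
  constructor
  · rintro ⟨hmem, -⟩
    exact (mem_sig_iff hσ hl htn).mp hmem
  · intro h
    exact ⟨(mem_sig_iff hσ hl htn).mpr h, hw⟩

end Aux3
section Aux4

/-- A white vertex is *discoverable*: it has a neighbour among earlier blacks. -/
def Dw {nb nw : ℕ} (W : Fin nb → Fin nw → ℝ) (σ : ℕ → V nb nw) (p : ℝ) (l : ℕ) : Prop :=
  ∃ j < l, σ j ∈ blacks nb nw ∧ (percGraph W p).Adj (σ j) (σ l)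

/-- A black vertex is *discoverable*: it is at distance 2 from an earlier black. -/
def Db {nb nw : ℕ} (W : Fin nb → Fin nw → ℝ) (σ : ℕ → V nb nw) (p : ℝ) (l : ℕ) : Prop :=
  ∃ m, 1 ≤ m ∧ m ≤ nb ∧ tb σ m ≤ l ∧ σ l ∈ nbhd2 (percGraph W p) {sigb σ m}

variable {nb nw : ℕ} {W : Fin nb → Fin nw → ℝ} {σ : ℕ → V nb nw} {p : ℝ}

lemma mem_nbhd_singleton {G : SimpleGraph (V nb nw)} {u v : V nb nw} :
    v ∈ nbhd G {u} ↔ v ≠ u ∧ G.Adj u v := by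
  constructor
  · rintro ⟨h1, a, rfl, h2⟩
    exact ⟨by simpa using h1, h2⟩
  · rintro ⟨h1, h2⟩
    exact ⟨by simpa using h1, u, rfl, h2⟩

lemma mem_nbhd2_singleton {G : SimpleGraph (V nb nw)} {u v : V nb nw} :
    v ∈ nbhd2 G {u} ↔ v ≠ u ∧ v ∉ nbhd G {u} ∧ ∃ a, a ∈ nbhd G {u} ∧ G.Adj a v := by
  constructor
  · rintro ⟨⟨h1, a, ha, hadj⟩, h2⟩
    exact ⟨by simpa using h2, h1, a, ha, hadj⟩
  · rintro ⟨h1, h2, a, ha, hadj⟩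
    exact ⟨⟨h2, a, ha, hadj⟩, by simpa using h1⟩

/-- M2: discoverable whites are not block starts. -/
lemma dw_not_brk (hW : GoodWeights W) {l : ℕ} (hl : l < nb + nw) (hd : Dw W σ p l) :
    ¬ Brk W σ p l := by
  obtain ⟨j, hj, -, -, hwt⟩ := hd
  rintro (h0 | hlt)
  · omega
  · exact absurd (le_trans (pew_le hW hj le_rfl hl) hwt) (not_le.mpr hlt)

/-- M1: non-discoverable whites are block starts (leads). -/
lemma not_dw_lead (hW : GoodWeights W) (hσ : IsPrimSeq W σ) (hp1 : p ≤ 1) {l : ℕ}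
    (hl : l < nb + nw) (hw : σ l ∈ whites nb nw) (hd : ¬ Dw W σ p l) :
    bst W σ p l = l := by
  by_contra h
  have hnbrk : ¬ Brk W σ p l := fun hb => h (bst_eq_self_iff.mpr hb)
  obtain ⟨j, -, hj2, hadj⟩ := prim_edge hW hσ hl hnbrk
  rcases adj_colors hp1 hadj with ⟨hb, -⟩ | ⟨-, hb⟩
  · exact hd ⟨j, hj2, hb, hadj⟩
  · exact not_black_white hb hw

/-- Leads among whites are exactly the non-discoverable ones. -/
lemma white_lead_iff (hW : GoodWeights W) (hσ : IsPrimSeq W σ) (hp1 : p ≤ 1) {l : ℕ}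
    (hl : l < nb + nw) (hw : σ l ∈ whites nb nw) :
    isLead (percGraph W p) σ (σ l) ↔ ¬ Dw W σ p l := by
  rw [lead_iff hW hσ hl]
  constructor
  · intro h hd
    exact dw_not_brk hW hl hd (bst_eq_self_iff.mp h)
  · exact not_dw_lead hW hσ hp1 hl hw

end Aux4
section Aux5

variable {nb nw : ℕ} {W : Fin nb → Fin nw → ℝ} {σ : ℕ → V nb nw} {p : ℝ}

/-- M3: a white block start whose block contains a black is immediately followed by
the first black of the block, to which it is adjacent. -/
lemma first_black (hW : GoodWeights W) (hσ : IsPrimSeq W σ) (hp1 : p ≤ 1) {l : ℕ}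
    (hl : l < nb + nw) (hw : σ l ∈ whites nb nw) (hbst : bst W σ p l = l)
    (hblk : ∃ j, j < nb + nw ∧ σ j ∈ blacks nb nw ∧ bst W σ p j = l) :
    l + 1 < nb + nw ∧ σ (l+1) ∈ blacks nb nw ∧
      (percGraph W p).Adj (σ l) (σ (l+1)) ∧ bst W σ p (l+1) = l := by
  obtain ⟨j, hjn, hjb, hjbst⟩ := hblk
  have hjl : l < j := by
    have h1 : l ≤ j := hjbst ▸ bst_le j
    rcases eq_or_lt_of_le h1 with rfl | h
    · exact absurd hjb (fun h => not_black_white h hw)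
    · exact h
  have hln : l + 1 < nb + nw := by omega
  have hb1 : bst W σ p (l+1) = l := by
    have h1 : l ≤ bst W σ p (l+1) := by
      have := bst_mono (W := W) (σ := σ) (p := p) (show l ≤ l + 1 by omega)
      omega
    have h2 : bst W σ p (l+1) ≤ l + 1 := bst_le _
    rcases eq_or_lt_of_le h2 with heq | h
    · exfalso
      have : l + 1 ≤ bst W σ p j := le_bst (bst_eq_self_iff.mp heq) (by omega)
      omega
    · omega
  have hnbrk : ¬ Brk W σ p (l+1) := by
    intro hbrk
    have h3 := bst_eq_self_iff.mpr hbrk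
    omega
  obtain ⟨j', hj'1, hj'2, hadj⟩ := prim_edge hW hσ hln hnbrk
  have hj'l : j' = l := by omega
  rw [hj'l] at hadj
  have hb : σ (l+1) ∈ blacks nb nw := by
    rcases adj_colors hp1 hadj with ⟨hb, -⟩ | ⟨-, hb⟩
    · exact absurd hb (fun h => not_black_white h hw)
    · exact hb
  exact ⟨hln, hb, hadj, hb1⟩

/-- M4: a non-root black is at distance 2 from an earlier black. -/
lemma nonroot_db (hW : GoodWeights W) (hσ : IsPrimSeq W σ) (hp1 : p ≤ 1) {l : ℕ}
    (hl : l < nb + nw) (hb : σ l ∈ blacks nb nw)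
    (hnr : ∃ j, j < l ∧ σ j ∈ blacks nb nw ∧ bst W σ p j = bst W σ p l) :
    Db W σ p l := by
  obtain ⟨j, hjl, hjb, hjbst⟩ := hnr
  have hnbrk : ¬ Brk W σ p l := by
    intro hbrk
    have h1 := bst_eq_self_iff.mpr hbrk
    have h2 := bst_le (W := W) (σ := σ) (p := p) j
    omega
  obtain ⟨j₁, hj₁1, hj₁2, hadj⟩ := prim_edge hW hσ hl hnbrk
  have hj₁w : σ j₁ ∈ whites nb nw := by
    rcases adj_colors hp1 hadj with ⟨h1, h2⟩ | ⟨h1, -⟩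
    · exact absurd h2 (fun h => not_black_white hb h)
    · exact h1
  by_cases hdw : Dw W σ p j₁
  · obtain ⟨j₂, hj₂1, hj₂b, hadj₂⟩ := hdw
    obtain ⟨hr1, hr2, hr3⟩ := black_rank hσ (by omega : j₂ < nb + nw) hj₂b
    refine ⟨cB σ (j₂+1), hr1, hr2, by omega, ?_⟩
    rw [sigb_eq, hr3]
    simp only [Nat.add_sub_cancel]
    rw [mem_nbhd2_singleton]
    refine ⟨fun h => by have := sig_inj hσ hl (by omega) h; omega,
      fun h => (no_adj_blacks hp1 hj₂b hb) (mem_nbhd_singleton.mp h).2, σ j₁, ?_, hadj⟩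
    exact mem_nbhd_singleton.mpr ⟨fun h => not_black_white hj₂b (h ▸ hj₁w), hadj₂⟩
  · have hj₁bst : bst W σ p j₁ = j₁ := not_dw_lead hW hσ hp1 (by omega) hj₁w hdw
    have hj₁eq : j₁ = bst W σ p l := by
      have := le_bst (bst_eq_self_iff.mp hj₁bst) (le_of_lt hj₁2)
      omega
    obtain ⟨hln, hb1, hadj1, hbst1⟩ := first_black hW hσ hp1 (by omega) hj₁w hj₁bst
      ⟨l, hl, hb, hj₁eq.symm⟩
    have hjge : j₁ + 1 ≤ j := by
      have h1 : j₁ ≤ j := by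
        have h2 := bst_le (W := W) (σ := σ) (p := p) j
        omega
      rcases eq_or_lt_of_le h1 with rfl | h
      · exact absurd hjb (fun h => not_black_white h hj₁w)
      · omega
    obtain ⟨hr1, hr2, hr3⟩ := black_rank hσ hln hb1
    refine ⟨cB σ (j₁+1+1), hr1, hr2, by omega, ?_⟩
    rw [sigb_eq, hr3]
    simp only [Nat.add_sub_cancel]
    rw [mem_nbhd2_singleton]
    refine ⟨fun h => by have := sig_inj hσ hl hln h; omega,
      fun h => (no_adj_blacks hp1 hb1 hb) (mem_nbhd_singleton.mp h).2, σ j₁, ?_, hadj⟩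
    exact mem_nbhd_singleton.mpr ⟨fun h => not_black_white hb1 (h ▸ hj₁w), hadj1.symm⟩

/-- M5: distance-2 vertices are reachable. -/
lemma nbhd2_reachable {G : SimpleGraph (V nb nw)} {u v : V nb nw}
    (h : v ∈ nbhd2 G {u}) : G.Reachable u v := by
  obtain ⟨-, -, a, ha, hadj⟩ := mem_nbhd2_singleton.mp h
  exact ((mem_nbhd_singleton.mp ha).2.reachable).trans hadj.reachable

/-- Roots among blacks are exactly the non-discoverable ones. -/
lemma black_root_iff (hW : GoodWeights W) (hσ : IsPrimSeq W σ) (hp1 : p ≤ 1) {l : ℕ}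
    (hl : l < nb + nw) (hb : σ l ∈ blacks nb nw) :
    isRoot (percGraph W p) σ (σ l) ↔ ¬ Db W σ p l := by
  rw [root_iff hW hσ hl hb]
  constructor
  · rintro h ⟨m, hm1, hm2, hm3, hmem⟩
    obtain ⟨htn, ht1, -, -, htb, htpred⟩ := tb_facts hσ hm1 hm2
    have hreach := nbhd2_reachable hmem
    rw [sigb_eq] at hreach
    have hbsteq := (reach_iff_bst hW hσ htpred hl).mp hreach
    have hne : σ l ≠ σ (tb σ m - 1) := (mem_nbhd2_singleton.mp hmem).1
    have hlt : tb σ m - 1 < l := by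
      rcases Nat.lt_or_ge (tb σ m - 1) l with h' | h'
      · exact h'
      · exfalso
        rcases eq_or_lt_of_le h' with heq | hgt
        · exact hne (by rw [heq])
        · omega
    exact absurd (h _ htpred hbsteq htb) (by omega)
  · intro h j hjn hbst hjb
    by_contra hlt
    push_neg at hlt
    exact h (nonroot_db hW hσ hp1 hl hb ⟨j, hlt, hjb, hbst⟩)

end Aux5
section Aux6

/-- First step at which a white vertex is discovered. -/
noncomputable def mdw {nb nw : ℕ} (W : Fin nb → Fin nw → ℝ) (σ : ℕ → V nb nw) (p : ℝ)
    (l : ℕ) : ℕ :=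
  sInf {m | 1 ≤ m ∧ tb σ m ≤ l ∧ (percGraph W p).Adj (sigb σ m) (σ l)}

/-- First step at which a black vertex is discovered. -/
noncomputable def mdb {nb nw : ℕ} (W : Fin nb → Fin nw → ℝ) (σ : ℕ → V nb nw) (p : ℝ)
    (l : ℕ) : ℕ :=
  sInf {m | 1 ≤ m ∧ tb σ m ≤ l ∧ σ l ∈ nbhd2 (percGraph W p) {sigb σ m}}

variable {nb nw : ℕ} {W : Fin nb → Fin nw → ℝ} {σ : ℕ → V nb nw} {p : ℝ}

lemma dw_of_adj (hσ : IsPrimSeq W σ) {m l : ℕ} (hm1 : 1 ≤ m) (hm2 : m ≤ nb)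
    (hml : tb σ m ≤ l) (hadj : (percGraph W p).Adj (sigb σ m) (σ l)) : Dw W σ p l := by
  obtain ⟨-, ht1, -, -, htb, -⟩ := tb_facts hσ hm1 hm2
  exact ⟨tb σ m - 1, by omega, htb, by rwa [sigb_eq] at hadj⟩

lemma mdw_spec (hσ : IsPrimSeq W σ) {l : ℕ} (hl : l < nb + nw) (hd : Dw W σ p l) :
    1 ≤ mdw W σ p l ∧ mdw W σ p l ≤ nb ∧ tb σ (mdw W σ p l) ≤ l ∧
      (percGraph W p).Adj (sigb σ (mdw W σ p l)) (σ l) := by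
  obtain ⟨j, hjl, hjb, hadj⟩ := hd
  obtain ⟨hr1, hr2, hr3⟩ := black_rank hσ (by omega : j < nb + nw) hjb
  have hmem : cB σ (j+1) ∈ {m | 1 ≤ m ∧ tb σ m ≤ l ∧ (percGraph W p).Adj (sigb σ m) (σ l)} := by
    refine ⟨hr1, by omega, ?_⟩
    rw [sigb_eq, hr3]
    simpa using hadj
  have hne : {m | 1 ≤ m ∧ tb σ m ≤ l ∧ (percGraph W p).Adj (sigb σ m) (σ l)}.Nonempty :=
    ⟨_, hmem⟩
  have hspec := Nat.sInf_mem hne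
  exact ⟨hspec.1, le_trans (Nat.sInf_le hmem) hr2, hspec.2.1, hspec.2.2⟩

lemma mdw_min {m l : ℕ} (hm1 : 1 ≤ m) (hml : tb σ m ≤ l)
    (hadj : (percGraph W p).Adj (sigb σ m) (σ l)) : mdw W σ p l ≤ m :=
  Nat.sInf_le ⟨hm1, hml, hadj⟩

lemma mdb_spec (hσ : IsPrimSeq W σ) {l : ℕ} (hd : Db W σ p l) :
    1 ≤ mdb W σ p l ∧ mdb W σ p l ≤ nb ∧ tb σ (mdb W σ p l) ≤ l ∧
      σ l ∈ nbhd2 (percGraph W p) {sigb σ (mdb W σ p l)} := by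
  obtain ⟨m, hm1, hm2, hml, hmem⟩ := hd
  have hmem' : m ∈ {m | 1 ≤ m ∧ tb σ m ≤ l ∧ σ l ∈ nbhd2 (percGraph W p) {sigb σ m}} :=
    ⟨hm1, hml, hmem⟩
  have hspec := Nat.sInf_mem (⟨_, hmem'⟩ : Set.Nonempty _)
  exact ⟨hspec.1, le_trans (Nat.sInf_le hmem') hm2, hspec.2.1, hspec.2.2⟩

lemma mdb_min {m l : ℕ} (hm1 : 1 ≤ m) (hml : tb σ m ≤ l)
    (hmem : σ l ∈ nbhd2 (percGraph W p) {sigb σ m}) : mdb W σ p l ≤ m :=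
  Nat.sInf_le ⟨hm1, hml, hmem⟩

lemma sigW_mono {i j : ℕ} (h : i ≤ j) : SigW σ i ⊆ SigW σ j :=
  Set.inter_subset_inter_left _ (Set.image_mono (fun x hx => lt_of_lt_of_le hx h))

lemma sigB_mono {i j : ℕ} (h : i ≤ j) : SigB σ i ⊆ SigB σ j :=
  Set.inter_subset_inter_left _ (Set.image_mono (fun x hx => lt_of_lt_of_le hx h))

lemma tb_le_of_cB {l k : ℕ} (hσ : IsPrimSeq W σ) (hk1 : 1 ≤ k) (hk2 : k ≤ nb)
    (h : k ≤ cB σ l) : tb σ k ≤ l := by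
  obtain ⟨-, ht1, -, hcpred, -, -⟩ := tb_facts hσ hk1 hk2
  by_contra hlt
  push_neg at hlt
  have := cB_mono (σ := σ) (show l ≤ tb σ k - 1 by omega)
  omega

/-- Joint closed form for `Kw` and `Ow`. -/
lemma KwOw_char (hW : GoodWeights W) (hσ : IsPrimSeq W σ) (hp1 : p ≤ 1) :
    ∀ k, 1 ≤ k → k ≤ nb →
      (Kw (percGraph W p) σ k = whites nb nw \
        (SigW σ (tb σ k) ∪ ⋃ j ∈ Finset.range (k-1), Ow (percGraph W p) σ (j+1)) ∧
      ∀ x, x ∈ Ow (percGraph W p) σ k ↔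
        ∃ l, l < nb + nw ∧ x = σ l ∧ σ l ∈ whites nb nw ∧ Dw W σ p l ∧ mdw W σ p l = k) := by
  intro k
  induction k using Nat.strong_induction_on with
  | _ k ih =>
    intro hk1 hk2
    have hKw : Kw (percGraph W p) σ k = whites nb nw \
        (SigW σ (tb σ k) ∪ ⋃ j ∈ Finset.range (k-1), Ow (percGraph W p) σ (j+1)) := by
      match k, hk1 with
      | 1, _ =>
        show whites nb nw \ SigW σ (tb σ 1) = _
        simp
      | (m+2), _ =>
        have ihm := (ih (m+1) (by omega) (by omega) (by omega)).1
        have hstep : Kw (percGraph W p) σ (m+2) = Kw (percGraph W p) σ (m+1) \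
            (Ow (percGraph W p) σ (m+1) ∪ SigW σ (tb σ (m+2))) := rfl
        rw [hstep, ihm]
        have hsub : SigW σ (tb σ (m+1)) ⊆ SigW σ (tb σ (m+2)) :=
          sigW_mono (tb_mono hσ (by omega) (by omega) (by omega))
        ext x
        simp only [Set.mem_diff, Set.mem_union, Set.mem_iUnion, Finset.mem_range,
          Nat.add_sub_cancel]
        constructor
        · rintro ⟨⟨hw, hns⟩, hno⟩
          refine ⟨hw, ?_⟩
          rintro (h1 | ⟨j, hj, h2⟩)
          · exact hno (Or.inr h1)
          · rcases Nat.lt_or_ge j m with hjm | hjm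
            · exact hns (Or.inr ⟨j, hjm, h2⟩)
            · have : j = m := by omega
              subst this
              exact hno (Or.inl h2)
        · rintro ⟨hw, hn⟩
          push_neg at hn
          refine ⟨⟨hw, ?_⟩, ?_⟩
          · rintro (h1 | ⟨j, hj, h2⟩)
            · exact hn.1 (hsub h1)
            · exact hn.2 j (by omega) h2
          · rintro (h1 | h2)
            · exact hn.2 m (by omega) h1
            · exact hn.1 h2
    refine ⟨hKw, fun x => ?_⟩
    constructor
    · rintro ⟨hnb, hkw⟩
      rw [hKw] at hkw
      obtain ⟨hw, hns⟩ := hkw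
      obtain ⟨l, hl, rfl⟩ := sig_surj hσ x
      obtain ⟨hadjne, hadj⟩ := mem_nbhd_singleton.mp hnb
      have htl : tb σ k ≤ l := by
        by_contra hlt
        push_neg at hlt
        exact hns (Or.inl ((mem_sigW_iff hσ hl hw hk1 hk2).mpr hlt))
      have hdw : Dw W σ p l := dw_of_adj hσ hk1 hk2 htl hadj
      refine ⟨l, hl, rfl, hw, hdw, ?_⟩
      have hle : mdw W σ p l ≤ k := mdw_min hk1 htl hadj
      rcases eq_or_lt_of_le hle with heq | hlt
      · exact heq
      · exfalso
        obtain ⟨hm1, hm2, hm3, hm4⟩ := mdw_spec hσ hl hdw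
        have hOw := (ih (mdw W σ p l) hlt hm1 hm2).2 (σ l)
        have hmem : σ l ∈ Ow (percGraph W p) σ (mdw W σ p l) :=
          hOw.mpr ⟨l, hl, rfl, hw, hdw, rfl⟩
        exact hns (Or.inr (Set.mem_biUnion (Finset.mem_range.mpr
          (by omega : mdw W σ p l - 1 < k - 1)) (by
            rwa [Nat.sub_add_cancel hm1])))
    · rintro ⟨l, hl, rfl, hw, hdw, hmd⟩
      obtain ⟨hm1, hm2, hm3, hm4⟩ := mdw_spec hσ hl hdw
      rw [hmd] at hm3 hm4
      refine ⟨mem_nbhd_singleton.mpr ⟨fun h => ?_, hm4⟩, ?_⟩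
      · rw [sigb_eq] at h
        obtain ⟨-, ht1, -, -, htb, htpred⟩ := tb_facts hσ hk1 hk2
        rw [h] at hw
        exact not_black_white htb hw
      · rw [hKw]
        refine ⟨hw, ?_⟩
        rintro (h1 | h2)
        · have := (mem_sigW_iff hσ hl hw hk1 hk2).mp h1
          omega
        · simp only [Set.mem_iUnion, Finset.mem_range] at h2
          obtain ⟨j, hj, hmem⟩ := h2
          have hOw := (ih (j+1) (by omega) (by omega) (by omega)).2 (σ l)
          obtain ⟨l', hl', heq, hw', hdw', hmd'⟩ := hOw.mp hmem
          have hll : l' = l := sig_inj hσ hl' hl heq.symm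
          rw [hll] at hmd'
          omega

lemma ObAux_fst (G : SimpleGraph (V nb nw)) (σ' : ℕ → V nb nw) :
    ∀ k, (ObAux G σ' k).1 = ⋃ j ∈ Finset.range k, Ob G σ' (j+1) := by
  intro k
  induction k with
  | zero => simp [ObAux]
  | succ m ihm =>
    have h1 : (ObAux G σ' (m+1)).1 = (ObAux G σ' m).1 ∪ Ob G σ' (m+1) := rfl
    rw [h1, ihm, Finset.range_add_one, Finset.set_biUnion_insert]
    exact Set.union_comm _ _

lemma Ob_eq (G : SimpleGraph (V nb nw)) (σ' : ℕ → V nb nw) (m : ℕ) :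
    Ob G σ' (m+1) = nbhd2 G {sigb σ' (m+1)} ∩ Kb G σ' (m+1) := rfl

/-- Closed form for `Ob`. -/
lemma Ob_char (hW : GoodWeights W) (hσ : IsPrimSeq W σ) (hp1 : p ≤ 1) :
    ∀ k, 1 ≤ k → k ≤ nb →
      ∀ x, x ∈ Ob (percGraph W p) σ k ↔
        ∃ l, l < nb + nw ∧ x = σ l ∧ σ l ∈ blacks nb nw ∧ Db W σ p l ∧ mdb W σ p l = k := by
  intro k
  induction k using Nat.strong_induction_on with
  | _ k ih =>
    intro hk1 hk2 x
    obtain ⟨m, rfl⟩ : ∃ m, k = m + 1 := ⟨k - 1, by omega⟩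
    rw [Ob_eq]
    constructor
    · rintro ⟨hnb2, hkb⟩
      obtain ⟨hb, hns⟩ := hkb
      rw [ObAux_fst] at hns
      obtain ⟨l, hl, rfl⟩ := sig_surj hσ x
      have htl : tb σ (m+1) ≤ l := by
        apply tb_le_of_cB hσ hk1 hk2
        by_contra hc
        push_neg at hc
        exact hns (Set.mem_union_right _
          ((mem_sigB_iff hσ hl hb hk1 hk2).mpr (by
            have := cB_succ_black hσ hl hb
            omega)))
      have hdb : Db W σ p l := ⟨m+1, hk1, hk2, htl, hnb2⟩
      refine ⟨l, hl, rfl, hb, hdb, ?_⟩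
      have hle : mdb W σ p l ≤ m+1 := mdb_min hk1 htl hnb2
      rcases eq_or_lt_of_le hle with heq | hlt
      · exact heq
      · exfalso
        obtain ⟨hm1, hm2, hm3, hm4⟩ := mdb_spec hσ hdb
        have hOb := ih (mdb W σ p l) hlt hm1 hm2 (σ l)
        have hmem : σ l ∈ Ob (percGraph W p) σ (mdb W σ p l) :=
          hOb.mpr ⟨l, hl, rfl, hb, hdb, rfl⟩
        refine hns (Set.mem_union_left _ ?_)
        refine Set.mem_biUnion (Finset.mem_range.mpr (show mdb W σ p l - 1 < m + 1 - 1 by omega)) ?_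
        rwa [Nat.sub_add_cancel hm1]
    · rintro ⟨l, hl, rfl, hb, hdb, hmd⟩
      obtain ⟨hm1, hm2, hm3, hm4⟩ := mdb_spec hσ hdb
      rw [hmd] at hm3 hm4
      refine ⟨hm4, hb, ?_⟩
      rw [ObAux_fst]
      rintro (h1 | h2)
      swap
      · have := (mem_sigB_iff hσ hl hb hk1 hk2).mp h2
        have h3 := cB_succ_black hσ hl hb
        have h4 : m + 1 ≤ cB σ l := by
          have h5 := (tb_facts hσ hk1 hk2).2.2.1
          have := cB_mono (σ := σ) hm3
          omega
        omega
      · simp only [Nat.add_sub_cancel] at h1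
        simp only [Set.mem_iUnion, Finset.mem_range] at h1
        obtain ⟨j, hj, hmem⟩ := h1
        have hOb := ih (j+1) (by omega) (by omega) (by omega) (σ l)
        obtain ⟨l', hl', heq, hb', hdb', hmd'⟩ := hOb.mp hmem
        have hll : l' = l := sig_inj hσ hl' hl heq.symm
        rw [hll] at hmd'
        omega

end Aux6
end PrimBip

open PrimBip

/-- Lemma `lem: Kset`: almost-sure structural properties of the
2-neighbourhood exploration of `G(n_b,n_w,p)` in Prim's order (stated here whenever the
edge weights are distinct and in `(0,1)` and `σ` is the Prim sequence). -/
theorem statement_10 {nb nw : ℕ} (hnb : 0 < nb) (hnw : 0 < nw)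
    (W : Fin nb → Fin nw → ℝ) (σ : ℕ → V nb nw)
    (hW : GoodWeights W) (hσ : IsPrimSeq W σ)
    (p : ℝ) (hp : p ∈ Set.Icc (0:ℝ) 1)
    (G : SimpleGraph (V nb nw)) (hG : G = percGraph W p)
    (k : ℕ) (hk1 : 1 ≤ k) (hk2 : k ≤ nb) :
    -- (i)
    (∀ v ∈ Jw G σ k, (nbhd G {v}).Nonempty →
      ∃ j, 1 ≤ j ∧ j ≤ k ∧ v = vat σ (tb σ j - 1) ∧
        sigb σ j ∈ nbhd G {v} ∧ sigb σ j ∈ Ib G σ k) ∧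
    -- (ii)
    (Jw G σ nb ∩ Ow G σ k = ∅ ∧ Ib G σ nb ∩ Ob G σ k = ∅) ∧
    -- (iii): decompositions into disjoint sets
    (whites nb nw \ Kw G σ k = (⋃ j ∈ Finset.range (k-1), Ow G σ (j+1)) ∪ Jw G σ k ∧
     blacks nb nw \ Kb G σ k = (⋃ j ∈ Finset.range (k-1), Ob G σ (j+1)) ∪ Ib G σ k ∧
     (∀ j₁ j₂, 1 ≤ j₁ → j₁ ≤ k-1 → 1 ≤ j₂ → j₂ ≤ k-1 → j₁ ≠ j₂ →
        Disjoint (Ow G σ j₁) (Ow G σ j₂) ∧ Disjoint (Ob G σ j₁) (Ob G σ j₂)) ∧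
     (∀ j, 1 ≤ j → j ≤ k-1 →
        Disjoint (Ow G σ j) (Jw G σ k) ∧ Disjoint (Ob G σ j) (Ib G σ k))) ∧
    -- (iv)
    (nbhd G (SigB σ (tb σ k)) ⊆ (⋃ j ∈ Finset.Icc 1 k, Ow G σ j) ∪ Jw G σ k ∧
     nbhd2 G (SigB σ (tb σ k)) = (⋃ j ∈ Finset.Icc 1 k, Ob G σ j) \ SigB σ (tb σ k)) := by
  
  subst hG
  obtain ⟨hp0, hp1⟩ := hp
  have hOwc : ∀ m, 1 ≤ m → m ≤ nb → ∀ x, x ∈ Ow (percGraph W p) σ m ↔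
      ∃ l, l < nb + nw ∧ x = σ l ∧ σ l ∈ whites nb nw ∧ Dw W σ p l ∧ mdw W σ p l = m :=
    fun m h1 h2 => (KwOw_char hW hσ hp1 m h1 h2).2
  have hObc := Ob_char hW hσ hp1
  have hKwk := (KwOw_char hW hσ hp1 k hk1 hk2).1
  obtain ⟨htkn, htk1, htkc, htkcp, htkb, htkpn⟩ := tb_facts hσ hk1 hk2
  -- membership characterisation of `Jw`
  have hJwc : ∀ m, 1 ≤ m → m ≤ nb → ∀ x, x ∈ Jw (percGraph W p) σ m ↔
      ∃ l, l < nb + nw ∧ x = σ l ∧ σ l ∈ whites nb nw ∧ l < tb σ m ∧ ¬ Dw W σ p l := by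
    intro m h1 h2 x
    constructor
    · rintro ⟨⟨⟨l, hl, rfl⟩, hw⟩, hlead⟩
      have hln : l < nb + nw := lt_of_lt_of_le hl (tb_facts hσ h1 h2).1
      exact ⟨l, hln, rfl, hw, hl, (white_lead_iff hW hσ hp1 hln hw).mp hlead⟩
    · rintro ⟨l, hl, rfl, hw, hlt, hnd⟩
      exact ⟨⟨⟨l, hlt, rfl⟩, hw⟩, (white_lead_iff hW hσ hp1 hl hw).mpr hnd⟩
  -- membership characterisation of `Ib`
  have hIbc : ∀ m, 1 ≤ m → m ≤ nb → ∀ x, x ∈ Ib (percGraph W p) σ m ↔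
      ∃ l, l < nb + nw ∧ x = σ l ∧ σ l ∈ blacks nb nw ∧ l < tb σ m ∧ ¬ Db W σ p l := by
    intro m h1 h2 x
    constructor
    · rintro ⟨⟨⟨l, hl, rfl⟩, hb⟩, hroot⟩
      have hln : l < nb + nw := lt_of_lt_of_le hl (tb_facts hσ h1 h2).1
      exact ⟨l, hln, rfl, hb, hl, (black_root_iff hW hσ hp1 hln hb).mp hroot⟩
    · rintro ⟨l, hl, rfl, hb, hlt, hnd⟩
      exact ⟨⟨⟨l, hlt, rfl⟩, hb⟩, (black_root_iff hW hσ hp1 hl hb).mpr hnd⟩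
  refine ⟨?_, ⟨?_, ?_⟩, ⟨?_, ?_, ?_, ?_⟩, ?_, ?_⟩
  -- ========== (i) ==========
  · rintro v hv ⟨u, hu⟩
    obtain ⟨l, hln, rfl, hw, hlt, hnd⟩ := (hJwc k hk1 hk2 v).mp hv
    have hbst : bst W σ p l = l := not_dw_lead hW hσ hp1 hln hw hnd
    obtain ⟨hune, hadju⟩ := mem_nbhd_singleton.mp hu
    obtain ⟨j'', hj''n, rfl⟩ := sig_surj hσ u
    have hub : σ j'' ∈ blacks nb nw := by
      rcases adj_colors hp1 hadju with ⟨h1, -⟩ | ⟨-, h2⟩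
      · exact absurd h1 (fun h => not_black_white h hw)
      · exact h2
    have hbst'' : bst W σ p j'' = l := by
      have := (reach_iff_bst hW hσ hln hj''n).mp hadju.reachable
      omega
    obtain ⟨hl1n, hb1, hadj1, hbst1⟩ := first_black hW hσ hp1 hln hw hbst
      ⟨j'', hj''n, hub, hbst''⟩
    obtain ⟨hr1, hr2, hr3⟩ := black_rank hσ hl1n hb1
    have hlne : l ≠ tb σ k - 1 := fun h => not_black_white (h ▸ htkb) (h ▸ hw)
    have hl2 : l + 1 + 1 ≤ tb σ k := by omega
    have hjk : cB σ (l+1+1) ≤ k := by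
      have := cB_mono (σ := σ) hl2
      omega
    refine ⟨cB σ (l+1+1), hr1, hjk, ?_, ?_, ?_⟩
    · rw [vat, hr3]
      norm_num
    · rw [sigb_eq, hr3]
      simp only [Nat.add_sub_cancel]
      exact mem_nbhd_singleton.mpr
        ⟨fun h => absurd (sig_inj hσ hl1n hln h) (by omega), hadj1⟩
    · rw [sigb_eq, hr3]
      simp only [Nat.add_sub_cancel]
      refine (hIbc k hk1 hk2 _).mpr ⟨l+1, hl1n, rfl, hb1, by omega, ?_⟩
      rintro ⟨m', hm'1, hm'2, hm'3, hm'mem⟩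
      obtain ⟨htn', ht1', -, -, htb', htpn'⟩ := tb_facts hσ hm'1 hm'2
      have hreach := nbhd2_reachable hm'mem
      rw [sigb_eq] at hreach
      have hb2 := (reach_iff_bst hW hσ htpn' hl1n).mp hreach
      have hge : l ≤ tb σ m' - 1 := by
        have := bst_le (W := W) (σ := σ) (p := p) (tb σ m' - 1)
        omega
      have heq : tb σ m' - 1 = l := by omega
      rw [heq] at htb'
      exact not_black_white htb' hw
  -- ========== (ii) white ==========
  · ext x
    simp only [Set.mem_inter_iff, Set.mem_empty_iff_false, iff_false, not_and]
    intro hJ hO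
    obtain ⟨l, hln, rfl, hw, hlt, hnd⟩ := (hJwc nb (by omega) le_rfl _).mp hJ
    obtain ⟨l', hl'n, heq, -, hdw, -⟩ := (hOwc k hk1 hk2 _).mp hO
    rw [sig_inj hσ hl'n hln heq.symm] at hdw
    exact hnd hdw
  -- ========== (ii) black ==========
  · ext x
    simp only [Set.mem_inter_iff, Set.mem_empty_iff_false, iff_false, not_and]
    intro hI hO
    obtain ⟨l, hln, rfl, hb, hlt, hnd⟩ := (hIbc nb (by omega) le_rfl _).mp hI
    obtain ⟨l', hl'n, heq, -, hdb, -⟩ := (hObc k hk1 hk2 _).mp hO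
    rw [sig_inj hσ hl'n hln heq.symm] at hdb
    exact hnd hdb
  -- ========== (iii) white decomposition ==========
  · rw [hKwk]
    ext x
    constructor
    · rintro ⟨hw, hns⟩
      rcases Classical.em (x ∈ SigW σ (tb σ k) ∪
          ⋃ j ∈ Finset.range (k-1), Ow (percGraph W p) σ (j+1)) with hmem | hmem
      · rcases hmem with hmem | hmem
        · obtain ⟨⟨l, hl0, rfl⟩, hw'⟩ := hmem
          have hl : l < tb σ k := hl0
          have hln : l < nb + nw := lt_of_lt_of_le hl htkn
          by_cases hdw : Dw W σ p l
          · obtain ⟨hm1, hm2, hm3, hm4⟩ := mdw_spec hσ hln hdw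
            have hmk : mdw W σ p l < k := by
              by_contra hge
              push_neg at hge
              have := tb_mono hσ hk1 hge hm2
              omega
            refine Or.inl (Set.mem_biUnion (Finset.mem_range.mpr
              (show mdw W σ p l - 1 < k - 1 by omega)) ?_)
            rw [Nat.sub_add_cancel hm1]
            exact (hOwc _ hm1 hm2 _).mpr ⟨l, hln, rfl, hw', hdw, rfl⟩
          · exact Or.inr ((hJwc k hk1 hk2 _).mpr ⟨l, hln, rfl, hw', hl, hdw⟩)
        · exact Or.inl hmem
      · exact absurd (show x ∈ whites nb nw \ (SigW σ (tb σ k) ∪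
            ⋃ j ∈ Finset.range (k-1), Ow (percGraph W p) σ (j+1)) from ⟨hw, hmem⟩) hns
    · rintro (hmem | hmem)
      · simp only [Set.mem_iUnion, Finset.mem_range] at hmem
        obtain ⟨j, hj, hx⟩ := hmem
        obtain ⟨l, hln, rfl, hw, -, -⟩ := (hOwc (j+1) (by omega) (by omega) _).mp hx
        refine ⟨hw, fun hk => ?_⟩
        exact hk.2 (Or.inr (Set.mem_biUnion (Finset.mem_range.mpr hj) hx))
      · obtain ⟨l, hln, rfl, hw, hlt, hnd⟩ := (hJwc k hk1 hk2 _).mp hmem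
        refine ⟨hw, fun hk => ?_⟩
        exact hk.2 (Or.inl ⟨⟨l, hlt, rfl⟩, hw⟩)
  -- ========== (iii) black decomposition ==========
  · rw [Kb, ObAux_fst]
    ext x
    constructor
    · rintro ⟨hb, hns⟩
      rcases Classical.em (x ∈ (⋃ j ∈ Finset.range (k-1), Ob (percGraph W p) σ (j+1)) ∪
          SigB σ (tb σ k)) with hmem | hmem
      · rcases hmem with hmem | hmem
        · exact Or.inl hmem
        · obtain ⟨⟨l, hl0, rfl⟩, hb'⟩ := hmem
          have hl : l < tb σ k := hl0
          have hln : l < nb + nw := lt_of_lt_of_le hl htkn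
          by_cases hdb : Db W σ p l
          · obtain ⟨hm1, hm2, hm3, hm4⟩ := mdb_spec hσ hdb
            have hmk : mdb W σ p l < k := by
              by_contra hge
              push_neg at hge
              have := tb_mono hσ hk1 hge hm2
              omega
            refine Or.inl (Set.mem_biUnion (Finset.mem_range.mpr
              (show mdb W σ p l - 1 < k - 1 by omega)) ?_)
            rw [Nat.sub_add_cancel hm1]
            exact (hObc _ hm1 hm2 _).mpr ⟨l, hln, rfl, hb', hdb, rfl⟩
          · exact Or.inr ((hIbc k hk1 hk2 _).mpr ⟨l, hln, rfl, hb', hl, hdb⟩)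
      · exact absurd (show x ∈ blacks nb nw \ ((⋃ j ∈ Finset.range (k-1),
            Ob (percGraph W p) σ (j+1)) ∪ SigB σ (tb σ k)) from ⟨hb, hmem⟩) hns
    · rintro (hmem | hmem)
      · simp only [Set.mem_iUnion, Finset.mem_range] at hmem
        obtain ⟨j, hj, hx⟩ := hmem
        obtain ⟨l, hln, rfl, hb, -, -⟩ := (hObc (j+1) (by omega) (by omega) _).mp hx
        refine ⟨hb, fun hk' => ?_⟩
        exact hk'.2 (Or.inl (Set.mem_biUnion (Finset.mem_range.mpr hj) hx))
      · obtain ⟨l, hln, rfl, hb, hlt, hnd⟩ := (hIbc k hk1 hk2 _).mp hmem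
        refine ⟨hb, fun hk' => ?_⟩
        exact hk'.2 (Or.inr ⟨⟨l, hlt, rfl⟩, hb⟩)
  -- ========== (iii) pairwise disjointness ==========
  · intro j₁ j₂ h11 h12 h21 h22 hne
    constructor
    · rw [Set.disjoint_left]
      intro x h1 h2
      obtain ⟨l, hln, rfl, -, -, hm1⟩ := (hOwc j₁ h11 (by omega) _).mp h1
      obtain ⟨l', hl'n, heq, -, -, hm2⟩ := (hOwc j₂ h21 (by omega) _).mp h2
      rw [sig_inj hσ hl'n hln heq.symm] at hm2
      omega
    · rw [Set.disjoint_left]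
      intro x h1 h2
      obtain ⟨l, hln, rfl, -, -, hm1⟩ := (hObc j₁ h11 (by omega) _).mp h1
      obtain ⟨l', hl'n, heq, -, -, hm2⟩ := (hObc j₂ h21 (by omega) _).mp h2
      rw [sig_inj hσ hl'n hln heq.symm] at hm2
      omega
  -- ========== (iii) disjointness with Jw/Ib ==========
  · intro j h1 h2
    constructor
    · rw [Set.disjoint_left]
      intro x hO hJ
      obtain ⟨l, hln, rfl, -, hdw, -⟩ := (hOwc j h1 (by omega) _).mp hO
      obtain ⟨l', hl'n, heq, -, -, hnd⟩ := (hJwc k hk1 hk2 _).mp hJ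
      rw [sig_inj hσ hl'n hln heq.symm] at hnd
      exact hnd hdw
    · rw [Set.disjoint_left]
      intro x hO hI
      obtain ⟨l, hln, rfl, -, hdb, -⟩ := (hObc j h1 (by omega) _).mp hO
      obtain ⟨l', hl'n, heq, -, -, hnd⟩ := (hIbc k hk1 hk2 _).mp hI
      rw [sig_inj hσ hl'n hln heq.symm] at hnd
      exact hnd hdb
  -- ========== (iv) 1-neighbourhood ==========
  · rintro x ⟨hxn, a, ha, hadj⟩
    obtain ⟨⟨b, hb, rfl⟩, hab⟩ := ha
    have hbtk : b < tb σ k := hb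
    have hbn : b < nb + nw := lt_of_lt_of_le hb htkn
    have hxw : x ∈ whites nb nw := by
      rcases adj_colors hp1 hadj with ⟨-, h2⟩ | ⟨h1, -⟩
      · exact h2
      · exact absurd hab (fun h => not_black_white h h1)
    obtain ⟨l, hln, rfl⟩ := sig_surj hσ x
    have hbl : b ≠ l := fun h => hadj.ne (by rw [h])
    by_cases hdw : Dw W σ p l
    · obtain ⟨hm1, hm2, hm3, hm4⟩ := mdw_spec hσ hln hdw
      have hmk : mdw W σ p l ≤ k := by
        rcases Nat.lt_or_ge b l with hblt | hbgt
        · obtain ⟨hq1, hq2, hq3⟩ := black_rank hσ hbn hab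
          have hle : mdw W σ p l ≤ cB σ (b+1) := by
            apply mdw_min hq1 (by omega)
            rw [sigb_eq, hq3]
            simpa using hadj
          have : cB σ (b+1) ≤ cB σ (tb σ k) := cB_mono (by omega)
          omega
        · obtain ⟨j₂, hj₂l, hj₂b, hadj₂⟩ := hdw
          obtain ⟨hq1, hq2, hq3⟩ := black_rank hσ (by omega) hj₂b
          have hle : mdw W σ p l ≤ cB σ (j₂+1) := by
            apply mdw_min hq1 (by omega)
            rw [sigb_eq, hq3]
            simpa using hadj₂
          have h5 : cB σ (j₂+1) ≤ cB σ b := cB_mono (by omega)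
          have h6 : cB σ b ≤ cB σ (tb σ k) := cB_mono (by omega)
          omega
      exact Or.inl (Set.mem_biUnion (Finset.mem_Icc.mpr ⟨hm1, hmk⟩)
        ((hOwc _ hm1 hm2 _).mpr ⟨l, hln, rfl, hxw, hdw, rfl⟩))
    · have hbst : bst W σ p l = l := not_dw_lead hW hσ hp1 hln hxw hdw
      have hbb : bst W σ p b = l := by
        have := (reach_iff_bst hW hσ hbn hln).mp hadj.reachable
        omega
      have hlb : l < b := by
        have := bst_le (W := W) (σ := σ) (p := p) b
        omega
      exact Or.inr ((hJwc k hk1 hk2 _).mpr ⟨l, hln, rfl, hxw, by omega, hdw⟩)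
  -- ========== (iv) 2-neighbourhood ==========
  · ext x
    constructor
    · rintro ⟨⟨hx1, a, ha, hadj⟩, hx2⟩
      obtain ⟨ha1, s, hs, hadjs⟩ := ha
      obtain ⟨⟨b, hb, rfl⟩, hsb⟩ := hs
      have hbtk : b < tb σ k := hb
      have hbn : b < nb + nw := lt_of_lt_of_le hb htkn
      have haw : a ∈ whites nb nw := by
        rcases adj_colors hp1 hadjs with ⟨-, h2⟩ | ⟨h1, -⟩
        · exact h2
        · exact absurd hsb (fun h => not_black_white h h1)
      have hxb : x ∈ blacks nb nw := by
        rcases adj_colors hp1 hadj with ⟨h1, -⟩ | ⟨-, h2⟩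
        · exact absurd haw (fun _ => not_black_white h1 haw)
        · exact h2
      obtain ⟨l, hln, rfl⟩ := sig_surj hσ x
      have hcl : ¬ cB σ (l+1) ≤ k := fun h => hx2 ((mem_sigB_iff hσ hln hxb hk1 hk2).mpr h)
      have htl : tb σ k ≤ l := by
        apply tb_le_of_cB hσ hk1 hk2
        have := cB_succ_black hσ hln hxb
        omega
      obtain ⟨hq1, hq2, hq3⟩ := black_rank hσ hbn hsb
      have hq2' : cB σ (b+1) ≤ k := by
        have := cB_mono (σ := σ) (show b + 1 ≤ tb σ k by omega)
        omega
      have hmm : σ l ∈ nbhd2 (percGraph W p) {sigb σ (cB σ (b+1))} := by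
        rw [sigb_eq, hq3]
        simp only [Nat.add_sub_cancel]
        rw [mem_nbhd2_singleton]
        refine ⟨fun h => hx2 (h ▸ ⟨⟨b, hb, rfl⟩, hsb⟩), fun h =>
          (no_adj_blacks hp1 hsb hxb) (mem_nbhd_singleton.mp h).2, a, ?_, hadj⟩
        exact mem_nbhd_singleton.mpr ⟨fun h => not_black_white hsb (h ▸ haw), hadjs⟩
      have hdb : Db W σ p l := ⟨cB σ (b+1), hq1, hq2, by omega, hmm⟩
      obtain ⟨hm1, hm2, hm3, hm4⟩ := mdb_spec hσ hdb
      have hmk : mdb W σ p l ≤ k :=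
        le_trans (mdb_min hq1 (show tb σ (cB σ (b+1)) ≤ l by omega) hmm) hq2'
      exact ⟨Set.mem_biUnion (Finset.mem_Icc.mpr ⟨hm1, hmk⟩)
        ((hObc _ hm1 hm2 _).mpr ⟨l, hln, rfl, hxb, hdb, rfl⟩), hx2⟩
    · rintro ⟨hmem, hx2⟩
      simp only [Set.mem_iUnion, Finset.mem_Icc] at hmem
      obtain ⟨j, ⟨hj1, hj2⟩, hx⟩ := hmem
      obtain ⟨l, hln, rfl, hxb, hdb, hmd⟩ := (hObc j hj1 (by omega) _).mp hx
      obtain ⟨hm1, hm2, hm3, hm4⟩ := mdb_spec hσ hdb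
      rw [hmd] at hm3 hm4
      obtain ⟨hne, hnn, a, ha, hadj⟩ := mem_nbhd2_singleton.mp hm4
      obtain ⟨hane, hadja⟩ := mem_nbhd_singleton.mp ha
      obtain ⟨htn', ht1', -, -, htb', htpn'⟩ := tb_facts hσ hj1 (by omega)
      have haw : a ∈ whites nb nw := by
        rcases adj_colors hp1 hadja with ⟨-, h2⟩ | ⟨h1, -⟩
        · exact h2
        · exact absurd (sigb_eq (σ := σ) j ▸ htb') (fun h => not_black_white h h1)
      refine ⟨⟨fun hmem' => ?_, a, ⟨fun hmem' => ?_, sigb σ j, ?_, hadja⟩, hadj⟩, hx2⟩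
      · obtain ⟨-, s, hs, hadj's⟩ := hmem'
        exact (no_adj_blacks hp1 hs.2 hxb) hadj's
      · exact not_black_white hmem'.2 haw
      · have hmo := tb_mono hσ hj1 hj2 hk2
        have h2 : tb σ j - 1 < tb σ k := by omega
        exact ⟨⟨tb σ j - 1, h2, (sigb_eq j).symm⟩, sigb_eq (σ := σ) j ▸ htb'⟩
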